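/- Let ℓ≥2 be an integer, R a commutative ring with unity, ∘ ∈ {0,−}, and {J,K} ∈ P([ℓ]) with min(J∪K)∈J. For every p ∈ R_{0,[ℓ]} there exists q ∈ R^{cx}_{{nd}⊔[ℓ]} such that ℝẼ^∘_{J,K}·(F(p) − F(F_{J,K}(q))) ∈ I_{0,[ℓ+1]}; that is, ℝẼ^∘_{J,K}·(Im F) ⊆ ℝẼ^∘_{J,K}·(Im(F∘F_{J,K})) + I_{0,[ℓ+1]}. -/
import Mathlib


open MvPolynomial Finset TensorProduct

noncomputable section

/-- `[ℓ] = {1, …, ℓ}`. -/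
abbrev Iset (n : ℕ) : Finset ℕ := Finset.Icc 1 n

/-! ### The "complex" rings `R_S = R[(D_{J,K})_{{J,K} ∈ P•(S)}]`.
An unordered pair `{J,K}` with `J ⊔ K = S` and `2 ≤ |J| ≤ |S|-2` is represented by
its unique member containing `min S`. -/

/-- Index type for the variables `D_{J,K}`, `{J,K} ∈ P•(S)`: the canonical member
of the pair is the one whose minimum is `min S`. -/
abbrev CxIdx (S : Finset ℕ) : Type :=
  {J : Finset ℕ // J ⊆ S ∧ 2 ≤ J.card ∧ 2 ≤ (S \ J).card ∧ J.min = S.min}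

/-- The polynomial ring `R_S` on the variables `D_{J,K}`, `{J,K} ∈ P•(S)`. -/
abbrev CxRing (R : Type) [CommRing R] (S : Finset ℕ) : Type := MvPolynomial (CxIdx S) R

def cxXv (R : Type) [CommRing R] (S J : Finset ℕ) : CxRing R S :=
  if h : J ⊆ S ∧ 2 ≤ J.card ∧ 2 ≤ (S \ J).card ∧ J.min = S.min then X ⟨J, h⟩ else 0

/-- The variable `D_{J,K}` of `R_S` (equal to `0` if `{J,K} ∉ P•(S)`). -/
def cxD (R : Type) [CommRing R] (S J K : Finset ℕ) : CxRing R S :=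
  if Disjoint J K ∧ J ∪ K = S then (if J.min ≤ K.min then cxXv R S J else cxXv R S K)
  else 0

/-- `{J,K} ⋂̸ {J',K'}`:  `J ⊄ J'`, `J ⊄ K'`, `J' ⊄ J` and `K' ⊄ J`. -/
abbrev NcapCx (J J' K' : Finset ℕ) : Prop :=
  ¬ J ⊆ J' ∧ ¬ J ⊆ K' ∧ ¬ J' ⊆ J ∧ ¬ K' ⊆ J

/-- The element `R^S_{abcd}`. -/
def cxRel (R : Type) [CommRing R] (S : Finset ℕ) (a b c d : ℕ) : CxRing R S :=
  (∑ J ∈ S.powerset,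
    if 2 ≤ J.card ∧ 2 ≤ (S \ J).card ∧ a ∈ J ∧ b ∈ J ∧ c ∈ S \ J ∧ d ∈ S \ J
    then cxD R S J (S \ J) else 0)
  - ∑ J ∈ S.powerset,
    if 2 ≤ J.card ∧ 2 ≤ (S \ J).card ∧ a ∈ J ∧ c ∈ J ∧ b ∈ S \ J ∧ d ∈ S \ J
    then cxD R S J (S \ J) else 0

/-- The ideal `I_S ⊂ R_S`. -/
def cxIdeal (R : Type) [CommRing R] (S : Finset ℕ) : Ideal (CxRing R S) :=
  Ideal.span (
    {x | ∃ J K J' K' : Finset ℕ,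
      (Disjoint J K ∧ J ∪ K = S ∧ 2 ≤ J.card ∧ 2 ≤ K.card) ∧
      (Disjoint J' K' ∧ J' ∪ K' = S ∧ 2 ≤ J'.card ∧ 2 ≤ K'.card) ∧
      NcapCx J J' K' ∧ x = cxD R S J K * cxD R S J' K'} ∪
    {x | ∃ a b c d : ℕ, a ∈ S ∧ b ∈ S ∧ c ∈ S ∧ d ∈ S ∧ a ≠ b ∧ c ≠ d ∧
      x = cxRel R S a b c d})

/-- The homomorphism `F : R_{[ℓ]} → R_{[ℓ+1]}`, `D_{J,K} ↦ D_{J∪{ℓ+1},K} + D_{J,K∪{ℓ+1}}`. -/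
def Fcx (R : Type) [CommRing R] (ℓ : ℕ) : CxRing R (Iset ℓ) →ₐ[R] CxRing R (Iset (ℓ + 1)) :=
  aeval fun i =>
    cxD R (Iset (ℓ + 1)) (i.1 ∪ {ℓ + 1}) (Iset ℓ \ i.1)
    + cxD R (Iset (ℓ + 1)) i.1 ((Iset ℓ \ i.1) ∪ {ℓ + 1})

/-- The homomorphism `F_P : R_{{nd}⊔B} → R_{[ℓ]}`, `D_{J',K'} ↦ D_{P∪(J'-{nd}),K'}` for
`nd ∈ J'`; here `nd = 0`. -/
def FJcx (R : Type) [CommRing R] (ℓ : ℕ) (P B : Finset ℕ) :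
    CxRing R (insert 0 B) →ₐ[R] CxRing R (Iset ℓ) :=
  aeval fun i => cxD R (Iset ℓ) (P ∪ i.1.erase 0) (insert 0 B \ i.1)

/-- The homomorphism `F_{J,K} : R_{{nd}⊔J} ⊗ R_{{nd}⊔K} → R_{[ℓ]}` acting by `F_K` on the
first factor and by `F_J` on the second. -/
def FJKcx (R : Type) [CommRing R] (ℓ : ℕ) (J K : Finset ℕ) :
    TensorProduct R (CxRing R (insert 0 J)) (CxRing R (insert 0 K)) →ₐ[R] CxRing R (Iset ℓ) :=
  Algebra.TensorProduct.productMap (FJcx R ℓ K J) (FJcx R ℓ J K)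

/-- The submodule `A ⊗ I_B + I_A ⊗ B` of `A ⊗_R B`. -/
def mixedSub (R : Type) [CommRing R] {A B : Type} [CommRing A] [CommRing B]
    [Algebra R A] [Algebra R B] (IA : Ideal A) (IB : Ideal B) :
    Submodule R (TensorProduct R A B) :=
  Submodule.span R
    ({x | ∃ p q, q ∈ IB ∧ x = p ⊗ₜ[R] q} ∪ {x | ∃ p q, p ∈ IA ∧ x = p ⊗ₜ[R] q})

/-! ### The "real" rings `R_{0,S}` with variables `ℝE_{J,K}`, `{J,K} ∈ P(S)`, and
`ℝD_{I;J,K}`, `(I,{J,K}) ∈ P̃•(S)`.  The unordered pair `{J,K}` is represented by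
its member whose minimum equals the minimum of `J ∪ K`. -/

abbrev EIdx (S : Finset ℕ) : Type := {J : Finset ℕ // J ⊆ S ∧ J.min = S.min}

abbrev DIdx (S : Finset ℕ) : Type :=
  {p : Finset ℕ × Finset ℕ //
    p.1 ⊆ S ∧ p.2 ⊆ S \ p.1 ∧ 1 ≤ p.1.card ∧ 2 ≤ (S \ p.1).card ∧ p.2.min = (S \ p.1).min}

/-- The polynomial ring `R_{0,S}`. -/
abbrev RRing (R : Type) [CommRing R] (S : Finset ℕ) : Type :=
  MvPolynomial (EIdx S ⊕ DIdx S) R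

def reXe (R : Type) [CommRing R] (S J : Finset ℕ) : RRing R S :=
  if h : J ⊆ S ∧ J.min = S.min then X (Sum.inl ⟨J, h⟩) else 0

/-- The variable `ℝE_{J,K}` of `R_{0,S}` (equal to `0` if `{J,K} ∉ P(S)`). -/
def reE (R : Type) [CommRing R] (S J K : Finset ℕ) : RRing R S :=
  if Disjoint J K ∧ J ∪ K = S then (if J.min ≤ K.min then reXe R S J else reXe R S K)
  else 0

def reXd (R : Type) [CommRing R] (S I J : Finset ℕ) : RRing R S :=
  if h : I ⊆ S ∧ J ⊆ S \ I ∧ 1 ≤ I.card ∧ 2 ≤ (S \ I).card ∧ J.min = (S \ I).min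
  then X (Sum.inr ⟨(I, J), h⟩) else 0

/-- The variable `ℝD_{I;J,K}` of `R_{0,S}` (equal to `0` if `(I,{J,K}) ∉ P̃•(S)`). -/
def reD (R : Type) [CommRing R] (S I J K : Finset ℕ) : RRing R S :=
  if Disjoint I (J ∪ K) ∧ Disjoint J K ∧ I ∪ (J ∪ K) = S then
    (if J.min ≤ K.min then reXd R S I J else reXd R S I K)
  else 0

/-- The sign `ε_{J,K}`: `1` if `min (J ∪ K) ∈ J` and `-1` otherwise. -/
def epsm (J K : Finset ℕ) : ℤ := if J.min ≤ K.min then 1 else -1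

/-- `{J,K} ⪯ {J',K'}`. -/
abbrev preceq (J K J' K' : Finset ℕ) : Prop := (J ⊆ J' ∧ K ⊆ K') ∨ (J ⊆ K' ∧ K ⊆ J')

/-- `{J,K} ∈ P(S)`. -/
abbrev validE (S J K : Finset ℕ) : Prop := Disjoint J K ∧ J ∪ K = S

/-- `(I,{J,K}) ∈ P̃•(S)`. -/
abbrev validD (S I J K : Finset ℕ) : Prop :=
  Disjoint I (J ∪ K) ∧ Disjoint J K ∧ I ∪ (J ∪ K) = S ∧ 1 ≤ I.card ∧ 2 ≤ (J ∪ K).card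

/-- The element `E^S_{abc}`. -/
def relE (R : Type) [CommRing R] (S : Finset ℕ) (a b c : ℕ) : RRing R S :=
  (∑ I ∈ S.powerset, ∑ J ∈ (S \ I).powerset,
    if 1 ≤ I.card ∧ 2 ≤ (S \ I).card ∧ a ∈ J ∧ b ∈ J ∧ c ∈ I
    then epsm J ((S \ I) \ J) • reD R S I J ((S \ I) \ J) else 0)
  - (∑ I ∈ S.powerset, ∑ J ∈ (S \ I).powerset,
    if 1 ≤ I.card ∧ 2 ≤ (S \ I).card ∧ a ∈ J ∧ c ∈ J ∧ b ∈ I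
    then epsm J ((S \ I) \ J) • reD R S I J ((S \ I) \ J) else 0)
  - ∑ I ∈ S.powerset, ∑ J ∈ (S \ I).powerset,
    if 1 ≤ I.card ∧ 2 ≤ (S \ I).card ∧ a ∈ I ∧ b ∈ J ∧ c ∈ (S \ I) \ J
    then epsm J ((S \ I) \ J) • reD R S I J ((S \ I) \ J) else 0

/-- The element `Σ_{{J,K} ∈ P(S)} ℝE_{J,K}`. -/
def relEsum (R : Type) [CommRing R] (S : Finset ℕ) : RRing R S :=
  ∑ J ∈ S.powerset.filter (fun J => J.min = S.min), reE R S J (S \ J)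

/-- The ideal `I_{0,S} ⊂ R_{0,S}`. -/
def reIdeal (R : Type) [CommRing R] (S : Finset ℕ) : Ideal (RRing R S) :=
  Ideal.span (
    {x | ∃ J K J' K' : Finset ℕ, validE S J K ∧ validE S J' K' ∧
      x = reE R S J K * reE R S J' K'} ∪
    {x | ∃ J K I' J' K' : Finset ℕ, validE S J K ∧ validD S I' J' K' ∧
      ¬ preceq J' K' J K ∧ x = reE R S J K * reD R S I' J' K'} ∪
    {x | ∃ I J K I' J' K' : Finset ℕ, validD S I J K ∧ validD S I' J' K' ∧
      ¬ preceq J K J' K' ∧ ¬ preceq J' K' J K ∧ ¬ J ∪ K ⊆ I' ∧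
      x = reD R S I J K * reD R S I' J' K'} ∪
    {relEsum R S} ∪
    {x | ∃ a b c : ℕ, a ∈ S ∧ b ∈ S ∧ c ∈ S ∧ a ≠ b ∧ a ≠ c ∧ b ≠ c ∧
      x = relE R S a b c})

/-- The element `G_{abc}` of Remark `RcM04rel_e2b2`. -/
def relG (R : Type) [CommRing R] (S : Finset ℕ) (a b c : ℕ) : RRing R S :=
  (∑ I ∈ S.powerset, ∑ J ∈ (S \ I).powerset,
    if 1 ≤ I.card ∧ 2 ≤ (S \ I).card ∧ a ∈ J ∧ b ∉ I ∧ c ∈ I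
    then epsm J ((S \ I) \ J) • reD R S I J ((S \ I) \ J) else 0)
  - ∑ I ∈ S.powerset, ∑ J ∈ (S \ I).powerset,
    if 1 ≤ I.card ∧ 2 ≤ (S \ I).card ∧ a ∈ J ∧ b ∈ I ∧ c ∉ I
    then epsm J ((S \ I) \ J) • reD R S I J ((S \ I) \ J) else 0

/-- The homomorphism `F : R_{0,[ℓ]} → R_{0,[ℓ+1]}`. -/
def Fre (R : Type) [CommRing R] (ℓ : ℕ) : RRing R (Iset ℓ) →ₐ[R] RRing R (Iset (ℓ + 1)) :=
  aeval fun ix =>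
    match ix with
    | Sum.inl e =>
        reE R (Iset (ℓ + 1)) (e.1 ∪ {ℓ + 1}) (Iset ℓ \ e.1)
        + reE R (Iset (ℓ + 1)) e.1 ((Iset ℓ \ e.1) ∪ {ℓ + 1})
    | Sum.inr d =>
        reD R (Iset (ℓ + 1)) (d.1.1 ∪ {ℓ + 1}) d.1.2 ((Iset ℓ \ d.1.1) \ d.1.2)
        + reD R (Iset (ℓ + 1)) d.1.1 (d.1.2 ∪ {ℓ + 1}) ((Iset ℓ \ d.1.1) \ d.1.2)
        + reD R (Iset (ℓ + 1)) d.1.1 d.1.2 (((Iset ℓ \ d.1.1) \ d.1.2) ∪ {ℓ + 1})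

/-- `ℝẼ⁰_{J,K} = ℝD_{{ℓ+1};J,K} ∈ R_{0,[ℓ+1]}`. -/
def reEt0 (R : Type) [CommRing R] (ℓ : ℕ) (J K : Finset ℕ) : RRing R (Iset (ℓ + 1)) :=
  reD R (Iset (ℓ + 1)) {ℓ + 1} J K

/-- `ℝẼ⁻_{J,K} = ℝE_{J,K∪{ℓ+1}} ∈ R_{0,[ℓ+1]}`. -/
def reEtm (R : Type) [CommRing R] (ℓ : ℕ) (J K : Finset ℕ) : RRing R (Iset (ℓ + 1)) :=
  reE R (Iset (ℓ + 1)) J (K ∪ {ℓ + 1})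

/-- `ℝD̃⁰_{I;J,K} ∈ R_{0,[ℓ+1]}` (for `(I,{J,K})` written with `min (J∪K) ∈ J`). -/
def reDt0 (R : Type) [CommRing R] (ℓ : ℕ) (I J K : Finset ℕ) : RRing R (Iset (ℓ + 1)) :=
  if 1 ∈ I then reD R (Iset (ℓ + 1)) I (J ∪ {ℓ + 1}) K
  else reD R (Iset (ℓ + 1)) (I ∪ {ℓ + 1}) J K

/-- `ℝD̃⁻_{I;J,K} = ℝD_{I;J,K∪{ℓ+1}} ∈ R_{0,[ℓ+1]}`. -/
def reDtm (R : Type) [CommRing R] (ℓ : ℕ) (I J K : Finset ℕ) : RRing R (Iset (ℓ + 1)) :=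
  reD R (Iset (ℓ + 1)) I J (K ∪ {ℓ + 1})

/-- The homomorphism `F_{J,K} : R^{cx}_{{nd}⊔[ℓ]} → R_{0,[ℓ]}`,
`D_{J',K'} ↦ (-1)^{|K|} ε_{J∩K',K∩K'} ℝD_{J'-{nd};J∩K',K∩K'}` for `nd ∈ J'`; here `nd = 0`. -/
def FJKre (R : Type) [CommRing R] (ℓ : ℕ) (J K : Finset ℕ) :
    CxRing R (insert 0 (Iset ℓ)) →ₐ[R] RRing R (Iset ℓ) :=
  aeval fun i =>
    ((-1 : ℤ) ^ K.card *
        epsm (J ∩ (insert 0 (Iset ℓ) \ i.1)) (K ∩ (insert 0 (Iset ℓ) \ i.1))) •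
      reD R (Iset ℓ) (i.1.erase 0)
        (J ∩ (insert 0 (Iset ℓ) \ i.1)) (K ∩ (insert 0 (Iset ℓ) \ i.1))

/-- The homomorphism `F²_{I;J,K} : R^{cx}_{{nd}⊔(J∪K)} → R_{0,[ℓ]}`,
`D_{J',K'} ↦ (-1)^{|K|} ε_{J∩K',K∩K'} ℝD_{I∪(J'-{nd});J∩K',K∩K'}` for `nd ∈ J'`;
here `nd = 0`. -/
def F2IJK (R : Type) [CommRing R] (ℓ : ℕ) (I J K : Finset ℕ) :
    CxRing R (insert 0 (J ∪ K)) →ₐ[R] RRing R (Iset ℓ) :=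
  aeval fun i =>
    ((-1 : ℤ) ^ K.card *
        epsm (J ∩ (insert 0 (J ∪ K) \ i.1)) (K ∩ (insert 0 (J ∪ K) \ i.1))) •
      reD R (Iset ℓ) (I ∪ i.1.erase 0)
        (J ∩ (insert 0 (J ∪ K) \ i.1)) (K ∩ (insert 0 (J ∪ K) \ i.1))

/-- `nd` for `{nd} ⊔ I`, identified with `min (ℤ⁺ - I)`. -/
def ndOf (I : Finset ℕ) : ℕ := sInf {n : ℕ | 0 < n ∧ n ∉ I}

/-- The homomorphism `F¹_{I;J,K} : R_{0,{nd}⊔I} → R_{0,[ℓ]}` with `nd = min (ℤ⁺ - I)`. -/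
def F1IJK (R : Type) [CommRing R] (ℓ : ℕ) (I J K : Finset ℕ) :
    RRing R (insert (ndOf I) I) →ₐ[R] RRing R (Iset ℓ) :=
  aeval fun ix =>
    match ix with
    | Sum.inl e =>
        if ndOf I ∈ e.1 then
          reE R (Iset ℓ) (J ∪ e.1.erase (ndOf I)) (K ∪ (insert (ndOf I) I \ e.1))
        else
          reE R (Iset ℓ) (J ∪ (insert (ndOf I) I \ e.1).erase (ndOf I)) (K ∪ e.1)
    | Sum.inr d =>
        if ndOf I ∈ d.1.1 then
          reD R (Iset ℓ) (d.1.1.erase (ndOf I) ∪ J ∪ K) d.1.2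
            ((insert (ndOf I) I \ d.1.1) \ d.1.2)
        else if ndOf I ∈ d.1.2 then
          reD R (Iset ℓ) d.1.1 (J ∪ d.1.2.erase (ndOf I))
            (K ∪ ((insert (ndOf I) I \ d.1.1) \ d.1.2))
        else
          reD R (Iset ℓ) d.1.1
            (J ∪ ((insert (ndOf I) I \ d.1.1) \ d.1.2).erase (ndOf I)) (K ∪ d.1.2)

/-- The homomorphism `F_{I;J,K} : R_{0,{nd}⊔I} ⊗ R^{cx}_{{nd}⊔(J∪K)} → R_{0,[ℓ]}`
induced by `F¹_{I;J,K}` and `F²_{I;J,K}`. -/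
def FIJK (R : Type) [CommRing R] (ℓ : ℕ) (I J K : Finset ℕ) :
    TensorProduct R (RRing R (insert (ndOf I) I)) (CxRing R (insert 0 (J ∪ K))) →ₐ[R]
      RRing R (Iset ℓ) :=
  Algebra.TensorProduct.productMap (F1IJK R ℓ I J K) (F2IJK R ℓ I J K)

section Stmt13Aux

variable (R : Type) [CommRing R]

lemma reE_zero {S A B : Finset ℕ} (h : ¬ validE S A B) : reE R S A B = 0 := if_neg h

lemma reXd_zero {S I C : Finset ℕ} (h : ¬ (1 ≤ I.card ∧ 2 ≤ (S \ I).card)) :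
    reXd R S I C = 0 := by
  unfold reXd
  rw [dif_neg]
  intro hh
  exact h ⟨hh.2.2.1, hh.2.2.2.1⟩

lemma reD_zero {S I C D : Finset ℕ} (h : ¬ validD S I C D) : reD R S I C D = 0 := by
  unfold reD
  by_cases h1 : Disjoint I (C ∪ D) ∧ Disjoint C D ∧ I ∪ (C ∪ D) = S
  · have hsd : S \ I = C ∪ D := by
      rw [← h1.2.2]; exact Finset.union_sdiff_cancel_left h1.1
    have hc : ¬ (1 ≤ I.card ∧ 2 ≤ (S \ I).card) := fun hc =>
      h ⟨h1.1, h1.2.1, h1.2.2, hc.1, hsd ▸ hc.2⟩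
    rw [if_pos h1]
    split_ifs <;> exact reXd_zero R hc
  · rw [if_neg h1]

lemma mem_genEE {S A B A' B' : Finset ℕ} :
    reE R S A B * reE R S A' B' ∈ reIdeal R S := by
  by_cases h : validE S A B
  · by_cases h' : validE S A' B'
    · exact Ideal.subset_span (Or.inl (Or.inl (Or.inl (Or.inl ⟨A, B, A', B', h, h', rfl⟩))))
    · rw [reE_zero R h', mul_zero]; exact Ideal.zero_mem _
  · rw [reE_zero R h, zero_mul]; exact Ideal.zero_mem _

lemma mem_genED {S A B I C D : Finset ℕ} (hp : ¬ preceq C D A B) :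
    reE R S A B * reD R S I C D ∈ reIdeal R S := by
  by_cases h : validE S A B
  · by_cases h' : validD S I C D
    · exact Ideal.subset_span
        (Or.inl (Or.inl (Or.inl (Or.inr ⟨A, B, I, C, D, h, h', hp, rfl⟩))))
    · rw [reD_zero R h', mul_zero]; exact Ideal.zero_mem _
  · rw [reE_zero R h, zero_mul]; exact Ideal.zero_mem _

lemma mem_genDD {S I C D I' C' D' : Finset ℕ} (h1 : ¬ preceq C D C' D')
    (h2 : ¬ preceq C' D' C D) (h3 : ¬ C ∪ D ⊆ I') :
    reD R S I C D * reD R S I' C' D' ∈ reIdeal R S := by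
  by_cases h : validD S I C D
  · by_cases h' : validD S I' C' D'
    · exact Ideal.subset_span
        (Or.inl (Or.inl (Or.inr ⟨I, C, D, I', C', D', h, h', h1, h2, h3, rfl⟩)))
    · rw [reD_zero R h', mul_zero]; exact Ideal.zero_mem _
  · rw [reD_zero R h, zero_mul]; exact Ideal.zero_mem _

lemma mem_relEsum {S : Finset ℕ} : relEsum R S ∈ reIdeal R S :=
  Ideal.subset_span (Or.inl (Or.inr rfl))

lemma notMem_Iset_succ (ℓ : ℕ) : ℓ + 1 ∉ Iset ℓ := by
  simp [Finset.mem_Icc]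

lemma zero_notMem_Iset (ℓ : ℕ) : 0 ∉ Iset ℓ := by
  simp [Finset.mem_Icc]

lemma min_insert_zero (T : Finset ℕ) : (insert 0 T).min = ((0 : ℕ) : WithTop ℕ) := by
  apply le_antisymm (Finset.min_le (Finset.mem_insert_self 0 T))
  exact Finset.le_min fun b _ => by exact_mod_cast Nat.zero_le b

lemma Iset_min {ℓ : ℕ} (hℓ : 1 ≤ ℓ) : (Iset ℓ).min = ((1 : ℕ) : WithTop ℕ) := by
  apply le_antisymm (Finset.min_le (by simp [Finset.mem_Icc, hℓ]))
  exact Finset.le_min fun b hb => by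
    simp only [Finset.mem_Icc] at hb; exact WithTop.coe_le_coe.mpr hb.1

lemma sdiff_h1 {A B : Finset ℕ} {a : ℕ} (hd : Disjoint A B) (ha : a ∉ A ∪ B) :
    ((A ∪ B) ∪ {a}) \ (A ∪ {a}) = B := by
  have hd' := Finset.disjoint_left.mp hd
  have ha' : ¬ (a ∈ A ∨ a ∈ B) := fun h => ha (Finset.mem_union.mpr h)
  ext x
  simp only [Finset.mem_sdiff, Finset.mem_union, Finset.mem_singleton]
  constructor
  · rintro ⟨h1, h2⟩
    push_neg at h2
    rcases h1 with (h | h) | h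
    · exact absurd h h2.1
    · exact h
    · exact absurd h h2.2
  · intro hb
    have hxa : x ≠ a := fun h => ha' (Or.inr (h ▸ hb))
    exact ⟨Or.inl (Or.inr hb), by push_neg; exact ⟨fun h => hd' h hb, hxa⟩⟩

lemma sdiff_h2 {A B : Finset ℕ} {a : ℕ} (hd : Disjoint A B) (ha : a ∉ A ∪ B) :
    ((A ∪ B) ∪ {a}) \ A = B ∪ {a} := by
  have hd' := Finset.disjoint_left.mp hd
  have ha' : ¬ (a ∈ A ∨ a ∈ B) := fun h => ha (Finset.mem_union.mpr h)
  ext x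
  simp only [Finset.mem_sdiff, Finset.mem_union, Finset.mem_singleton]
  constructor
  · rintro ⟨h1, h2⟩
    rcases h1 with (h | h) | h
    · exact absurd h h2
    · exact Or.inl h
    · exact Or.inr h
  · rintro (h | h)
    · exact ⟨Or.inl (Or.inr h), fun h' => hd' h' h⟩
    · exact ⟨Or.inr h, fun h' => ha' (Or.inl (h ▸ h'))⟩

lemma insert_zero_sdiff {Sx I : Finset ℕ} (h0 : 0 ∉ Sx) :
    insert 0 Sx \ insert 0 I = Sx \ I := by
  ext x
  simp only [Finset.mem_sdiff, Finset.mem_insert]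
  constructor
  · rintro ⟨h1 | h1, h2⟩
    · exact absurd (Or.inl rfl) (h1 ▸ h2)
    · push_neg at h2
      exact ⟨h1, h2.2⟩
  · rintro ⟨h1, h2⟩
    have hx0 : x ≠ 0 := fun h => h0 (h ▸ h1)
    exact ⟨Or.inr h1, by push_neg; exact ⟨hx0, h2⟩⟩

lemma subset_punch {X Y : Finset ℕ} {a : ℕ} (h : X ⊆ Y ∪ {a}) (ha : a ∉ X) : X ⊆ Y := by
  intro x hx
  rcases Finset.mem_union.mp (h hx) with h' | h'
  · exact h'
  · exact absurd (Finset.mem_singleton.mp h' ▸ hx) ha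

end Stmt13Aux
/-- `ℝẼ^∘_{J,K}·(Im F) ⊆ ℝẼ^∘_{J,K}·(Im (F ∘ F_{J,K})) + I_{0,[ℓ+1]}`. -/
theorem stmt13 (R : Type) [CommRing R] (ℓ : ℕ) (hℓ : 2 ≤ ℓ) (J K : Finset ℕ)
    (hdisj : Disjoint J K) (hun : J ∪ K = Iset ℓ) (hmin : J.min = (J ∪ K).min)
    (E : RRing R (Iset (ℓ + 1))) (hE : E = reEt0 R ℓ J K ∨ E = reEtm R ℓ J K) :
    ∀ p : RRing R (Iset ℓ), ∃ q : CxRing R (insert 0 (Iset ℓ)),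
      E * (Fre R ℓ p - Fre R ℓ (FJKre R ℓ J K q)) ∈ reIdeal R (Iset (ℓ + 1)) := by
  classical
  have key : ∀ n : EIdx (Iset ℓ) ⊕ DIdx (Iset ℓ), ∃ q : CxRing R (insert 0 (Iset ℓ)),
      E * (Fre R ℓ (X n) - Fre R ℓ (FJKre R ℓ J K q)) ∈ reIdeal R (Iset (ℓ + 1)) := by
    have hJl : J ⊆ Iset ℓ := hun ▸ Finset.subset_union_left
    have hKl : K ⊆ Iset ℓ := hun ▸ Finset.subset_union_right
    have hl1 : ℓ + 1 ∉ Iset ℓ := notMem_Iset_succ ℓ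
    have hl1J : ℓ + 1 ∉ J := fun h => hl1 (hJl h)
    have hl1K : ℓ + 1 ∉ K := fun h => hl1 (hKl h)
    have hll : Iset ℓ ⊆ Iset (ℓ + 1) := Finset.Icc_subset_Icc_right (by omega)
    have hminl : (Iset ℓ).min = ((1 : ℕ) : WithTop ℕ) := Iset_min (by omega)
    have hmin1 : (Iset (ℓ + 1)).min = ((1 : ℕ) : WithTop ℕ) := Iset_min (by omega)
    have hJmin : J.min = ((1 : ℕ) : WithTop ℕ) := by rw [hmin, hun, hminl]
    have h1J : (1 : ℕ) ∈ J := Finset.mem_of_min hJmin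
    have hKJ : Iset ℓ \ J = K := by
      rw [← hun]; exact Finset.union_sdiff_cancel_left hdisj
    have hIs : Iset (ℓ + 1) = (J ∪ K) ∪ {ℓ + 1} := by
      rw [hun]
      ext x
      simp only [Finset.mem_Icc, Finset.mem_union, Finset.mem_singleton]
      omega
    have hXeq : ∀ X : Finset ℕ, X ⊆ Iset ℓ → J ⊆ X → Disjoint K X → X = J := by
      intro X hXl hJX hKX
      apply Finset.Subset.antisymm _ hJX
      intro x hx
      have hxJK : x ∈ J ∪ K := hun.symm ▸ hXl hx
      exact (Finset.mem_union.mp hxJK).resolve_right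
        (fun hk => Finset.disjoint_left.mp hKX hk hx)
    intro n
    rcases n with e | d
    · -- E-variable case
      have hF : Fre R ℓ (X (Sum.inl e)) =
          reE R (Iset (ℓ + 1)) (e.1 ∪ {ℓ + 1}) (Iset ℓ \ e.1)
          + reE R (Iset (ℓ + 1)) e.1 ((Iset ℓ \ e.1) ∪ {ℓ + 1}) := by
        simp [Fre]
      rcases hE with hE0 | hEm
      · -- E = reEt0
        have h1e : (1 : ℕ) ∈ e.1 := Finset.mem_of_min (e.2.2.trans hminl)
        by_cases he : e.1 = J
        · -- the pair of e is {J,K}: use relEsum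
          refine ⟨0, ?_⟩
          rw [map_zero, map_zero, sub_zero, hF, he, hE0, hKJ]
          unfold reEt0
          have hs1 : Iset (ℓ + 1) \ (J ∪ {ℓ + 1}) = K := by
            rw [hIs]; exact sdiff_h1 hdisj (hun ▸ hl1)
          have hs2 : Iset (ℓ + 1) \ J = K ∪ {ℓ + 1} := by
            rw [hIs]; exact sdiff_h2 hdisj (hun ▸ hl1)
          have ha1 : J ∪ {ℓ + 1} ∈ (Iset (ℓ + 1)).powerset.filter
              (fun T => T.min = (Iset (ℓ + 1)).min) := by
            refine Finset.mem_filter.mpr ⟨Finset.mem_powerset.mpr ?_, ?_⟩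
            · exact Finset.union_subset (hJl.trans hll)
                (Finset.singleton_subset_iff.mpr (by simp [Finset.mem_Icc]))
            · rw [Finset.min_union, hJmin, Finset.min_singleton, hmin1]
              exact min_eq_left (WithTop.coe_le_coe.mpr (by omega))
          have hne : J ≠ J ∪ {ℓ + 1} := fun h =>
            hl1J (h ▸ Finset.mem_union_right J (Finset.mem_singleton_self _))
          have ha2 : J ∈ ((Iset (ℓ + 1)).powerset.filter
              (fun T => T.min = (Iset (ℓ + 1)).min)).erase (J ∪ {ℓ + 1}) :=
            Finset.mem_erase.mpr ⟨hne, Finset.mem_filter.mpr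
              ⟨Finset.mem_powerset.mpr (hJl.trans hll), hJmin.trans hmin1.symm⟩⟩
          have hsum : relEsum R (Iset (ℓ + 1)) =
              reE R (Iset (ℓ + 1)) (J ∪ {ℓ + 1}) (Iset (ℓ + 1) \ (J ∪ {ℓ + 1}))
              + (reE R (Iset (ℓ + 1)) J (Iset (ℓ + 1) \ J)
                + ∑ T ∈ (((Iset (ℓ + 1)).powerset.filter
                    (fun T => T.min = (Iset (ℓ + 1)).min)).erase (J ∪ {ℓ + 1})).erase J,
                  reE R (Iset (ℓ + 1)) T (Iset (ℓ + 1) \ T)) := by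
            unfold relEsum
            rw [← Finset.add_sum_erase _ _ ha1, ← Finset.add_sum_erase _ _ ha2]
          have hterm : reE R (Iset (ℓ + 1)) (J ∪ {ℓ + 1}) K
              + reE R (Iset (ℓ + 1)) J (K ∪ {ℓ + 1}) =
              relEsum R (Iset (ℓ + 1))
              - ∑ T ∈ (((Iset (ℓ + 1)).powerset.filter
                  (fun T => T.min = (Iset (ℓ + 1)).min)).erase (J ∪ {ℓ + 1})).erase J,
                reE R (Iset (ℓ + 1)) T (Iset (ℓ + 1) \ T) := by
            rw [hsum, hs1, hs2]; ring
          rw [hterm, mul_sub, Finset.mul_sum]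
          refine Ideal.sub_mem _ (Ideal.mul_mem_left _ _ (mem_relEsum R))
            (Ideal.sum_mem _ ?_)
          intro T hT
          obtain ⟨hTneJ, hT'⟩ := Finset.mem_erase.mp hT
          obtain ⟨hTne1, hT''⟩ := Finset.mem_erase.mp hT'
          obtain ⟨hTp, hTmin⟩ := Finset.mem_filter.mp hT''
          have hTsub : T ⊆ Iset (ℓ + 1) := Finset.mem_powerset.mp hTp
          have h1T : (1 : ℕ) ∈ T := Finset.mem_of_min (hTmin.trans hmin1)
          rw [mul_comm]
          apply mem_genED R
          rintro (⟨h1, h2⟩ | ⟨h1, h2⟩)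
          · have hsub : T ⊆ J ∪ {ℓ + 1} := by
              intro x hx
              have hx1 := hTsub hx
              rw [hIs] at hx1
              rcases Finset.mem_union.mp hx1 with h | h
              · rcases Finset.mem_union.mp h with h' | h'
                · exact Finset.mem_union_left _ h'
                · exact absurd hx (Finset.mem_sdiff.mp (h2 h')).2
              · exact Finset.mem_union_right _ h
            by_cases hm : ℓ + 1 ∈ T
            · exact hTne1 (Finset.Subset.antisymm hsub
                (Finset.union_subset h1 (Finset.singleton_subset_iff.mpr hm)))
            · exact hTneJ (Finset.Subset.antisymm (subset_punch hsub hm) h1)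
          · exact (Finset.mem_sdiff.mp (h1 h1J)).2 h1T
        · -- e.1 ≠ J
          refine ⟨0, ?_⟩
          rw [map_zero, map_zero, sub_zero, hF, hE0, mul_add]
          unfold reEt0
          have hKdis : ∀ {X : Finset ℕ}, K ⊆ Iset ℓ \ X → Disjoint K X :=
            fun h => Finset.disjoint_left.mpr fun {x} hk => (Finset.mem_sdiff.mp (h hk)).2
          refine Ideal.add_mem _ ?_ ?_
          · rw [mul_comm]
            apply mem_genED R
            rintro (⟨h1, h2⟩ | ⟨h1, h2⟩)
            · exact he (hXeq e.1 e.2.1 (subset_punch h1 hl1J) (hKdis h2))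
            · exact (Finset.mem_sdiff.mp (h1 h1J)).2 h1e
          · rw [mul_comm]
            apply mem_genED R
            rintro (⟨h1, h2⟩ | ⟨h1, h2⟩)
            · exact he (hXeq e.1 e.2.1 h1 (hKdis (subset_punch h2 hl1K)))
            · exact (Finset.mem_sdiff.mp (subset_punch h1 hl1J h1J)).2 h1e
      · -- E = reEtm : products of two E's
        refine ⟨0, ?_⟩
        rw [map_zero, map_zero, sub_zero, hF, hEm, mul_add]
        unfold reEtm
        exact Ideal.add_mem _ (mem_genEE R) (mem_genEE R)
    · -- D-variable case
      obtain ⟨⟨I', J'⟩, hd⟩ := d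
      have hF : Fre R ℓ (X (Sum.inr ⟨(I', J'), hd⟩)) =
          reD R (Iset (ℓ + 1)) (I' ∪ {ℓ + 1}) J' ((Iset ℓ \ I') \ J')
          + reD R (Iset (ℓ + 1)) I' (J' ∪ {ℓ + 1}) ((Iset ℓ \ I') \ J')
          + reD R (Iset (ℓ + 1)) I' J' (((Iset ℓ \ I') \ J') ∪ {ℓ + 1}) := by
        simp [Fre]
      have hI'l : I' ⊆ Iset ℓ := hd.1
      have h1c : 1 ≤ I'.card := hd.2.2.1
      have h2c : 2 ≤ (Iset ℓ \ I').card := hd.2.2.2.1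
      have hdmin : J'.min = (Iset ℓ \ I').min := hd.2.2.2.2
      have hJ'A : J' ⊆ Iset ℓ \ I' := hd.2.1
      have hunA : J' ∪ (Iset ℓ \ I') \ J' = Iset ℓ \ I' :=
        Finset.union_sdiff_of_subset hJ'A
      have hJ'l : J' ⊆ Iset ℓ := hJ'A.trans (Finset.sdiff_subset)
      have hK'l : (Iset ℓ \ I') \ J' ⊆ Iset ℓ :=
        (Finset.sdiff_subset).trans (Finset.sdiff_subset)
      have hl1I' : ℓ + 1 ∉ I' := fun h => hl1 (hI'l h)
      have hl1J' : ℓ + 1 ∉ J' := fun h => hl1 (hJ'l h)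
      have hl1K' : ℓ + 1 ∉ (Iset ℓ \ I') \ J' := fun h => hl1 (hK'l h)
      have hdJK' : Disjoint J' ((Iset ℓ \ I') \ J') := Finset.disjoint_sdiff
      have hmu : (Iset ℓ \ I').min = J'.min ⊓ ((Iset ℓ \ I') \ J').min := by
        conv_lhs => rw [← hunA]
        exact Finset.min_union
      have hminle : J'.min ≤ ((Iset ℓ \ I') \ J').min :=
        inf_eq_left.mp (hdmin.trans hmu).symm
      have hA'ne : (Iset ℓ \ I').Nonempty :=
        Finset.card_pos.mp (by omega)
      have hJ'ne : J'.Nonempty := by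
        rw [Finset.nonempty_iff_ne_empty]
        intro h
        rw [h, Finset.min_empty] at hdmin
        exact hA'ne.ne_empty (Finset.min_eq_top.mp hdmin.symm)
      by_cases hp : preceq J' ((Iset ℓ \ I') \ J') J K
      · -- the pair of d is dominated by {J,K}: exact lift
        have h0I' : (0 : ℕ) ∉ I' := fun h => zero_notMem_Iset ℓ (hI'l h)
        have hA0 : insert 0 (Iset ℓ) \ insert 0 I' = Iset ℓ \ I' :=
          insert_zero_sdiff (zero_notMem_Iset ℓ)
        have hi : insert 0 I' ⊆ insert 0 (Iset ℓ) ∧ 2 ≤ (insert 0 I').card ∧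
            2 ≤ (insert 0 (Iset ℓ) \ insert 0 I').card ∧
            (insert 0 I').min = (insert 0 (Iset ℓ)).min := by
          refine ⟨Finset.insert_subset_insert _ hI'l, ?_, ?_, ?_⟩
          · rw [Finset.card_insert_of_notMem h0I']
            have := hd.2.2.1; omega
          · rw [hA0]; exact h2c
          · rw [min_insert_zero, min_insert_zero]
        set sgn : ℤ := (-1 : ℤ) ^ K.card *
          epsm (J ∩ (insert 0 (Iset ℓ) \ insert 0 I'))
            (K ∩ (insert 0 (Iset ℓ) \ insert 0 I')) with hsgn
        refine ⟨sgn • X ⟨insert 0 I', hi⟩, ?_⟩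
        have hsgn2 : sgn * sgn = 1 := by
          have he2 : ∀ A B : Finset ℕ, epsm A B * epsm A B = 1 := by
            intro A B; unfold epsm; split_ifs <;> norm_num
          have : sgn * sgn = ((-1 : ℤ) * (-1)) ^ K.card *
              (epsm (J ∩ (insert 0 (Iset ℓ) \ insert 0 I'))
                (K ∩ (insert 0 (Iset ℓ) \ insert 0 I')) *
               epsm (J ∩ (insert 0 (Iset ℓ) \ insert 0 I'))
                (K ∩ (insert 0 (Iset ℓ) \ insert 0 I'))) := by
            rw [hsgn, mul_pow]; ring
          rw [this, he2]; norm_num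
        have hq : FJKre R ℓ J K ((sgn • X ⟨insert 0 I', hi⟩ :
            CxRing R (insert 0 (Iset ℓ)))) =
            reD R (Iset ℓ) I' (J ∩ (Iset ℓ \ I')) (K ∩ (Iset ℓ \ I')) := by
          rw [map_zsmul]
          have hXv : FJKre R ℓ J K (X (⟨insert 0 I', hi⟩ : CxIdx (insert 0 (Iset ℓ)))) =
              sgn • reD R (Iset ℓ) ((insert 0 I').erase 0)
                (J ∩ (insert 0 (Iset ℓ) \ insert 0 I'))
                (K ∩ (insert 0 (Iset ℓ) \ insert 0 I')) := by
            simp [FJKre, hsgn]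
          rw [hXv, smul_smul, hsgn2, one_smul, Finset.erase_insert h0I', hA0]
        have hDX : reD R (Iset ℓ) I' (J ∩ (Iset ℓ \ I')) (K ∩ (Iset ℓ \ I')) =
            X (Sum.inr ⟨(I', J'), hd⟩) := by
          have hcond : Disjoint I' (J' ∪ (Iset ℓ \ I') \ J') ∧
              Disjoint J' ((Iset ℓ \ I') \ J') ∧
              I' ∪ (J' ∪ (Iset ℓ \ I') \ J') = Iset ℓ := by
            rw [hunA]
            exact ⟨Finset.disjoint_sdiff, hdJK', Finset.union_sdiff_of_subset hI'l⟩
          rcases hp with ⟨hp1, hp2⟩ | ⟨hp1, hp2⟩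
          · have hJA : J ∩ (Iset ℓ \ I') = J' := by
              conv_lhs => rw [← hunA]
              rw [Finset.inter_union_distrib_left,
                Finset.inter_eq_right.mpr hp1,
                Finset.disjoint_iff_inter_eq_empty.mp (hdisj.mono_right hp2),
                Finset.union_empty]
            have hKA : K ∩ (Iset ℓ \ I') = (Iset ℓ \ I') \ J' := by
              conv_lhs => rw [← hunA]
              rw [Finset.inter_union_distrib_left,
                Finset.disjoint_iff_inter_eq_empty.mp (hdisj.symm.mono_right hp1),
                Finset.empty_union, Finset.inter_eq_right.mpr hp2]
            rw [hJA, hKA]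
            unfold reD
            rw [if_pos hcond, if_pos hminle]
            unfold reXd
            rw [dif_pos hd]
          · have hJA : J ∩ (Iset ℓ \ I') = (Iset ℓ \ I') \ J' := by
              conv_lhs => rw [← hunA]
              rw [Finset.inter_union_distrib_left,
                Finset.disjoint_iff_inter_eq_empty.mp (hdisj.mono_right hp1),
                Finset.empty_union, Finset.inter_eq_right.mpr hp2]
            have hKA : K ∩ (Iset ℓ \ I') = J' := by
              conv_lhs => rw [← hunA]
              rw [Finset.inter_union_distrib_left,
                Finset.inter_eq_right.mpr hp1,
                Finset.disjoint_iff_inter_eq_empty.mp (hdisj.symm.mono_right hp2),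
                Finset.union_empty]
            rw [hJA, hKA]
            unfold reD
            have hcond' : Disjoint I' ((Iset ℓ \ I') \ J' ∪ J') ∧
                Disjoint ((Iset ℓ \ I') \ J') J' ∧
                I' ∪ ((Iset ℓ \ I') \ J' ∪ J') = Iset ℓ := by
              rw [Finset.union_comm]
              exact ⟨hcond.1, hcond.2.1.symm, hcond.2.2⟩
            rw [if_pos hcond']
            have hnle : ¬ ((Iset ℓ \ I') \ J').min ≤ J'.min := by
              intro hle
              have heq : J'.min = ((Iset ℓ \ I') \ J').min := le_antisymm hminle hle
              obtain ⟨a, ha⟩ := hJ'ne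
              obtain ⟨b, hb⟩ := Finset.min_of_mem ha
              have hbJ : b ∈ J' := Finset.mem_of_min hb
              have hbK : b ∈ (Iset ℓ \ I') \ J' := Finset.mem_of_min (heq ▸ hb)
              exact Finset.disjoint_left.mp hdJK' hbJ hbK
            rw [if_neg hnle]
            unfold reXd
            rw [dif_pos hd]
        rw [hq, hDX, sub_self, mul_zero]
        exact Ideal.zero_mem _
      · -- incomparable: all products are generators
        refine ⟨0, ?_⟩
        rw [map_zero, map_zero, sub_zero, hF]
        have hcontain : ∀ {X Y : Finset ℕ}, J ⊆ X → K ⊆ Y →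
            X ∪ Y ⊆ Iset ℓ \ I' → False := by
          intro X Y h1 h2 h3
          obtain ⟨x, hxI⟩ := Finset.card_pos.mp (show 0 < I'.card by omega)
          have hxJK : x ∈ J ∪ K := hun.symm ▸ hI'l hxI
          exact (Finset.mem_sdiff.mp (h3 (Finset.union_subset_union h1 h2 hxJK))).2 hxI
        have hnp1 : ¬ preceq J K J' ((Iset ℓ \ I') \ J') := by
          rintro (⟨h1, h2⟩ | ⟨h1, h2⟩)
          · exact hcontain h1 h2 hunA.le
          · exact hcontain h1 h2 ((Finset.union_comm _ _).le.trans hunA.le)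
        have hSlnotI : ¬ (J ∪ K ⊆ I') := by
          rw [hun]
          intro h
          obtain ⟨x, hx⟩ := hA'ne
          exact (Finset.mem_sdiff.mp hx).2 (h (Finset.mem_sdiff.mp hx).1)
        have hnotup : ¬ (J ∪ K ⊆ I' ∪ {ℓ + 1}) := by
          rw [hun]
          intro h
          obtain ⟨x, hx⟩ := hA'ne
          have hx1 := Finset.mem_sdiff.mp hx
          rcases Finset.mem_union.mp (h hx1.1) with h' | h'
          · exact hx1.2 h'
          · exact hl1 (Finset.mem_singleton.mp h' ▸ hx1.1)
        rcases hE with hE0 | hEm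
        · rw [hE0]
          unfold reEt0
          rw [mul_add, mul_add]
          refine Ideal.add_mem _ (Ideal.add_mem _ ?_ ?_) ?_
          · exact mem_genDD R hnp1 hp hnotup
          · refine mem_genDD R ?_ ?_ hSlnotI
            · rintro (⟨ha, hb⟩ | ⟨ha, hb⟩)
              · exact hnp1 (Or.inl ⟨subset_punch ha hl1J, hb⟩)
              · exact hnp1 (Or.inr ⟨ha, subset_punch hb hl1K⟩)
            · rintro (⟨ha, hb⟩ | ⟨ha, hb⟩)
              · exact hl1J (ha (Finset.mem_union_right _ (Finset.mem_singleton_self _)))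
              · exact hl1K (ha (Finset.mem_union_right _ (Finset.mem_singleton_self _)))
          · refine mem_genDD R ?_ ?_ hSlnotI
            · rintro (⟨ha, hb⟩ | ⟨ha, hb⟩)
              · exact hnp1 (Or.inl ⟨ha, subset_punch hb hl1K⟩)
              · exact hnp1 (Or.inr ⟨subset_punch ha hl1J, hb⟩)
            · rintro (⟨ha, hb⟩ | ⟨ha, hb⟩)
              · exact hl1K (hb (Finset.mem_union_right _ (Finset.mem_singleton_self _)))
              · exact hl1J (hb (Finset.mem_union_right _ (Finset.mem_singleton_self _)))
        · rw [hEm]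
          unfold reEtm
          rw [mul_add, mul_add]
          refine Ideal.add_mem _ (Ideal.add_mem _ ?_ ?_) ?_
          · apply mem_genED R
            rintro (⟨h1, h2⟩ | ⟨h1, h2⟩)
            · exact hp (Or.inl ⟨h1, subset_punch h2 hl1K'⟩)
            · exact hp (Or.inr ⟨subset_punch h1 hl1J', h2⟩)
          · apply mem_genED R
            rintro (⟨h1, h2⟩ | ⟨h1, h2⟩)
            · exact hl1J (h1 (Finset.mem_union_right _ (Finset.mem_singleton_self _)))
            · exact hp (Or.inr ⟨subset_punch (Finset.subset_union_left.trans h1) hl1J', h2⟩)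
          · apply mem_genED R
            rintro (⟨h1, h2⟩ | ⟨h1, h2⟩)
            · exact hp (Or.inl ⟨h1, subset_punch (Finset.subset_union_left.trans h2) hl1K'⟩)
            · exact hl1J (h2 (Finset.mem_union_right _ (Finset.mem_singleton_self _)))

  intro p
  induction p using MvPolynomial.induction_on with
  | C r =>
      refine ⟨C r, ?_⟩
      have h1 : FJKre R ℓ J K (C r) = C r := by
        simp [FJKre, MvPolynomial.algebraMap_eq]
      rw [h1, sub_self, mul_zero]
      exact Ideal.zero_mem _
  | add p q hp hq =>
      obtain ⟨a, ha⟩ := hp; obtain ⟨b, hb⟩ := hq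
      refine ⟨a + b, ?_⟩
      have heq : E * (Fre R ℓ (p + q) - Fre R ℓ (FJKre R ℓ J K (a + b))) =
          E * (Fre R ℓ p - Fre R ℓ (FJKre R ℓ J K a)) +
          E * (Fre R ℓ q - Fre R ℓ (FJKre R ℓ J K b)) := by
        rw [map_add, map_add (FJKre R ℓ J K), map_add]; ring
      rw [heq]; exact Ideal.add_mem _ ha hb
  | mul_X p n hp =>
      obtain ⟨a, ha⟩ := hp; obtain ⟨b, hb⟩ := key n
      refine ⟨a * b, ?_⟩
      have heq : E * (Fre R ℓ (p * X n) - Fre R ℓ (FJKre R ℓ J K (a * b))) =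
          Fre R ℓ (X n) * (E * (Fre R ℓ p - Fre R ℓ (FJKre R ℓ J K a))) +
          Fre R ℓ (FJKre R ℓ J K a) * (E * (Fre R ℓ (X n) - Fre R ℓ (FJKre R ℓ J K b))) := by
        rw [map_mul, map_mul (FJKre R ℓ J K), map_mul]; ring
      rw [heq]
      exact Ideal.add_mem _ (Ideal.mul_mem_left _ _ ha) (Ideal.mul_mem_left _ _ hb)


end
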